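/- In the Black-Scholes setting, for fixed S, T, σ > 0 and r, q ∈ ℝ, the function K ↦ C(S,K,T,r,q,σ) is twice differentiable on (0, ∞) with ∂²C/∂K² = exp(−r·T)·φ(d2)/(K·σ·√T); in particular ∂²C/∂K² > 0 for every K > 0, so the call price is a strictly convex function of the strike. -/

import Mathlib

open Real

/-- Standard normal density. -/
noncomputable def stdNormalPdf (x : ℝ) : ℝ := Real.exp (-x ^ 2 / 2) / Real.sqrt (2 * Real.pi)

/-- Standard normal cumulative distribution function. -/
noncomputable def stdNormalCdf (x : ℝ) : ℝ := ∫ t in Set.Iic x, stdNormalPdf t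

/-- Black-Scholes `d₁`. -/
noncomputable def bsD1 (S K T r q σ : ℝ) : ℝ :=
  (Real.log (S / K) + (r - q + σ ^ 2 / 2) * T) / (σ * Real.sqrt T)

/-- Black-Scholes `d₂`. -/
noncomputable def bsD2 (S K T r q σ : ℝ) : ℝ := bsD1 S K T r q σ - σ * Real.sqrt T

/-- Black-Scholes call option price. -/
noncomputable def bsCall (S K T r q σ : ℝ) : ℝ :=
  S * Real.exp (-q * T) * stdNormalCdf (bsD1 S K T r q σ) -
    K * Real.exp (-r * T) * stdNormalCdf (bsD2 S K T r q σ)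

lemma stdNormalPdf_pos (x : ℝ) : 0 < stdNormalPdf x := by
  unfold stdNormalPdf
  have : (0:ℝ) < Real.sqrt (2 * Real.pi) := Real.sqrt_pos.2 (by positivity)
  positivity

lemma continuous_stdNormalPdf : Continuous stdNormalPdf := by
  unfold stdNormalPdf
  fun_prop

lemma integrable_stdNormalPdf : MeasureTheory.Integrable stdNormalPdf := by
  have h : stdNormalPdf = fun x => Real.exp (-(1/2) * x ^ 2) / Real.sqrt (2 * Real.pi) := by
    funext x; unfold stdNormalPdf; ring_nf
  rw [h]
  exact (integrable_exp_neg_mul_sq (by norm_num)).div_const _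

lemma hasDerivAt_stdNormalCdf (x : ℝ) :
    HasDerivAt stdNormalCdf (stdNormalPdf x) x := by
  have key : ∀ y : ℝ, stdNormalCdf y =
      stdNormalCdf 0 + ∫ t in (0:ℝ)..y, stdNormalPdf t := by
    intro y
    have := intervalIntegral.integral_Iic_sub_Iic
      (integrable_stdNormalPdf.integrableOn (s := Set.Iic 0))
      (integrable_stdNormalPdf.integrableOn (s := Set.Iic y))
    unfold stdNormalCdf
    linarith [this]
  have hder : HasDerivAt (fun y => stdNormalCdf 0 + ∫ t in (0:ℝ)..y, stdNormalPdf t)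
      (stdNormalPdf x) x := by
    refine HasDerivAt.const_add _ ?_
    exact intervalIntegral.integral_hasDerivAt_right
      (integrable_stdNormalPdf.intervalIntegrable)
      continuous_stdNormalPdf.aestronglyMeasurable.stronglyMeasurableAtFilter
      continuous_stdNormalPdf.continuousAt
  exact hder.congr_of_eventuallyEq (Filter.Eventually.of_forall key)

lemma key_identity (S T σ r q K : ℝ) (hS : 0 < S) (hT : 0 < T) (hσ : 0 < σ) (hK : 0 < K) :
    S * Real.exp (-q * T) * stdNormalPdf (bsD1 S K T r q σ) =
      K * Real.exp (-r * T) * stdNormalPdf (bsD2 S K T r q σ) := by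
  set c := σ * Real.sqrt T with hc_def
  have hc : 0 < c := mul_pos hσ (Real.sqrt_pos.2 hT)
  set d1 := bsD1 S K T r q σ with hd1_def
  set d2 := bsD2 S K T r q σ with hd2_def
  set L := Real.log (S / K) with hL_def
  have hc2 : c ^ 2 = σ ^ 2 * T := by
    rw [hc_def, mul_pow, Real.sq_sqrt hT.le]
  have hd1c : d1 * c = L + (r - q + σ ^ 2 / 2) * T := by
    rw [hd1_def, bsD1, ← hc_def, ← hL_def, div_mul_cancel₀ _ hc.ne']
  have hd2e : d2 = d1 - c := rfl
  have hsq : d1 ^ 2 = d2 ^ 2 + 2 * (L + (r - q) * T) := by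
    have : d1 ^ 2 - (d1 - c) ^ 2 = 2 * (d1 * c) - c ^ 2 := by ring
    rw [hd2e]
    rw [hd1c, hc2] at this
    linarith
  have hexp : Real.exp (-d1 ^ 2 / 2) =
      Real.exp (-d2 ^ 2 / 2) * Real.exp (-(L + (r - q) * T)) := by
    rw [← Real.exp_add]
    congr 1
    rw [hsq]; ring
  have heL : Real.exp L = S / K := by
    rw [hL_def, Real.exp_log (div_pos hS hK)]
  have hSK : S * Real.exp (-L) = K := by
    rw [Real.exp_neg, heL]
    field_simp
  unfold stdNormalPdf
  rw [hexp]
  have : S * Real.exp (-q * T) * Real.exp (-(L + (r - q) * T)) = K * Real.exp (-r * T) := by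
    have h1 : Real.exp (-(L + (r - q) * T)) = Real.exp (-L) * Real.exp (-(r-q)*T) := by
      rw [← Real.exp_add]; ring_nf
    rw [h1]
    have h2 : Real.exp (-q * T) * Real.exp (-(r - q) * T) = Real.exp (-r * T) := by
      rw [← Real.exp_add]; ring_nf
    calc S * Real.exp (-q * T) * (Real.exp (-L) * Real.exp (-(r - q) * T))
        = (S * Real.exp (-L)) * (Real.exp (-q * T) * Real.exp (-(r - q) * T)) := by ring
      _ = K * Real.exp (-r * T) := by rw [hSK, h2]
  calc S * Real.exp (-q * T) *
        (Real.exp (-d2 ^ 2 / 2) * Real.exp (-(L + (r - q) * T)) / Real.sqrt (2 * Real.pi))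
      = (S * Real.exp (-q * T) * Real.exp (-(L + (r - q) * T))) *
        (Real.exp (-d2 ^ 2 / 2) / Real.sqrt (2 * Real.pi)) := by ring
    _ = K * Real.exp (-r * T) * (Real.exp (-d2 ^ 2 / 2) / Real.sqrt (2 * Real.pi)) := by
        rw [this]

lemma hasDerivAt_bsD1 (S T σ r q K : ℝ) (hS : 0 < S) (hT : 0 < T) (hσ : 0 < σ) (hK : 0 < K) :
    HasDerivAt (fun k => bsD1 S k T r q σ) (-(1 / (K * (σ * Real.sqrt T)))) K := by
  set c := σ * Real.sqrt T with hc_def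
  have hc : 0 < c := mul_pos hσ (Real.sqrt_pos.2 hT)
  have h1 : HasDerivAt (fun k : ℝ => (Real.log S - Real.log k + (r - q + σ ^ 2 / 2) * T) / c)
      (-(1 / (K * c))) K := by
    have hlog : HasDerivAt (fun k : ℝ => Real.log k) (1 / K) K := by
      simpa using Real.hasDerivAt_log hK.ne'
    have := ((hlog.const_sub (Real.log S)).add_const ((r - q + σ ^ 2 / 2) * T)).div_const c
    refine this.congr_deriv ?_
    field_simp
  refine h1.congr_of_eventuallyEq ?_
  filter_upwards [eventually_gt_nhds hK] with k hk
  rw [bsD1, Real.log_div hS.ne' hk.ne']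

lemma hasDerivAt_bsD2 (S T σ r q K : ℝ) (hS : 0 < S) (hT : 0 < T) (hσ : 0 < σ) (hK : 0 < K) :
    HasDerivAt (fun k => bsD2 S k T r q σ) (-(1 / (K * (σ * Real.sqrt T)))) K := by
  unfold bsD2
  exact (hasDerivAt_bsD1 S T σ r q K hS hT hσ hK).sub_const _

lemma hasDerivAt_bsCall (S T σ r q K : ℝ) (hS : 0 < S) (hT : 0 < T) (hσ : 0 < σ) (hK : 0 < K) :
    HasDerivAt (fun k => bsCall S k T r q σ)
      (-(Real.exp (-r * T) * stdNormalCdf (bsD2 S K T r q σ))) K := by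
  set c := σ * Real.sqrt T with hc_def
  have hc : 0 < c := mul_pos hσ (Real.sqrt_pos.2 hT)
  have hN1 : HasDerivAt (fun k => stdNormalCdf (bsD1 S k T r q σ))
      (stdNormalPdf (bsD1 S K T r q σ) * (-(1 / (K * c)))) K :=
    (hasDerivAt_stdNormalCdf _).comp K (hasDerivAt_bsD1 S T σ r q K hS hT hσ hK)
  have hN2 : HasDerivAt (fun k => stdNormalCdf (bsD2 S k T r q σ))
      (stdNormalPdf (bsD2 S K T r q σ) * (-(1 / (K * c)))) K :=
    (hasDerivAt_stdNormalCdf _).comp K (hasDerivAt_bsD2 S T σ r q K hS hT hσ hK)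
  have hA : HasDerivAt (fun k => S * Real.exp (-q * T) * stdNormalCdf (bsD1 S k T r q σ))
      (S * Real.exp (-q * T) * (stdNormalPdf (bsD1 S K T r q σ) * (-(1 / (K * c))))) K :=
    hN1.const_mul _
  have hB : HasDerivAt (fun k => k * Real.exp (-r * T) * stdNormalCdf (bsD2 S k T r q σ))
      (Real.exp (-r * T) * stdNormalCdf (bsD2 S K T r q σ) +
        K * Real.exp (-r * T) * (stdNormalPdf (bsD2 S K T r q σ) * (-(1 / (K * c))))) K := by
    have := ((hasDerivAt_id K).mul_const (Real.exp (-r * T))).mul hN2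
    refine this.congr_deriv ?_
    simp only [id_eq]
    ring
  have hsum := hA.sub hB
  have hkey := key_identity S T σ r q K hS hT hσ hK
  have hval : S * Real.exp (-q * T) * (stdNormalPdf (bsD1 S K T r q σ) * (-(1 / (K * c)))) -
      (Real.exp (-r * T) * stdNormalCdf (bsD2 S K T r q σ) +
        K * Real.exp (-r * T) * (stdNormalPdf (bsD2 S K T r q σ) * (-(1 / (K * c))))) =
      -(Real.exp (-r * T) * stdNormalCdf (bsD2 S K T r q σ)) := by
    have : S * Real.exp (-q * T) * (stdNormalPdf (bsD1 S K T r q σ) * (-(1 / (K * c)))) =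
        K * Real.exp (-r * T) * (stdNormalPdf (bsD2 S K T r q σ) * (-(1 / (K * c)))) := by
      rw [show S * Real.exp (-q * T) * (stdNormalPdf (bsD1 S K T r q σ) * (-(1 / (K * c)))) =
        (S * Real.exp (-q * T) * stdNormalPdf (bsD1 S K T r q σ)) * (-(1 / (K * c))) by ring,
        hkey]
      ring
    rw [this]; ring
  rw [← hval]
  unfold bsCall
  exact hsum

theorem bsCall_second_deriv_strike (S T σ r q : ℝ) (hS : 0 < S) (hT : 0 < T) (hσ : 0 < σ) :
    ∀ K : ℝ, 0 < K →
      DifferentiableAt ℝ (fun k => bsCall S k T r q σ) K ∧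
      HasDerivAt (deriv (fun k => bsCall S k T r q σ))
        (Real.exp (-r * T) * stdNormalPdf (bsD2 S K T r q σ) / (K * σ * Real.sqrt T)) K ∧
      0 < Real.exp (-r * T) * stdNormalPdf (bsD2 S K T r q σ) / (K * σ * Real.sqrt T) := by
  intro K hK
  set c := σ * Real.sqrt T with hc_def
  have hc : 0 < c := mul_pos hσ (Real.sqrt_pos.2 hT)
  have hdiff := (hasDerivAt_bsCall S T σ r q K hS hT hσ hK).differentiableAt
  refine ⟨hdiff, ?_, ?_⟩
  · have hN2 : HasDerivAt (fun k => stdNormalCdf (bsD2 S k T r q σ))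
        (stdNormalPdf (bsD2 S K T r q σ) * (-(1 / (K * c)))) K :=
      (hasDerivAt_stdNormalCdf _).comp K (hasDerivAt_bsD2 S T σ r q K hS hT hσ hK)
    have hg : HasDerivAt (fun k => -(Real.exp (-r * T) * stdNormalCdf (bsD2 S k T r q σ)))
        (Real.exp (-r * T) * stdNormalPdf (bsD2 S K T r q σ) / (K * σ * Real.sqrt T)) K := by
      have := (hN2.const_mul (Real.exp (-r * T))).neg
      have hKne := hK.ne'
      have hσne := hσ.ne'
      have hTne := (Real.sqrt_pos.2 hT).ne'
      refine this.congr_deriv ?_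
      rw [hc_def]
      field_simp
    refine hg.congr_of_eventuallyEq ?_
    filter_upwards [eventually_gt_nhds hK] with k hk
    exact (hasDerivAt_bsCall S T σ r q k hS hT hσ hk).deriv
  · have := stdNormalPdf_pos (bsD2 S K T r q σ)
    have hsT : 0 < Real.sqrt T := Real.sqrt_pos.2 hT
    positivity
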